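/- Let G be a group, φ an automorphism of G, and H a normal subgroup of G with φ(H) = H; let φ̄ be the induced automorphism of G/H. Suppose that for every g ∈ G the automorphism (τ_g ∘ φ)|_H of H (where τ_g is the inner automorphism x ↦ g·x·g⁻¹) has exactly one Reidemeister class. Then the quotient map G → G/H induces a bijection between the Reidemeister classes of φ and the Reidemeister classes of φ̄: the preimage of each Reidemeister class of φ̄ is exactly one Reidemeister class of φ. In particular, R(φ) = R(φ̄). -/
import Mathlib


/-- Twisted conjugacy relation for an automorphism `φ` of `G`:
`x ∼ y` iff `y = h * x * φ(h)⁻¹` for some `h`. -/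
def twistedConj {G : Type*} [Group G] (φ : G ≃* G) (x y : G) : Prop :=
  ∃ h : G, y = h * x * (φ h)⁻¹

/-- The set of Reidemeister (twisted conjugacy) classes of `φ`.
Its cardinality is the Reidemeister number `R(φ)`. -/
def ReidemeisterClasses {G : Type*} [Group G] (φ : G ≃* G) := Quot (twistedConj φ)

theorem twistedConj_equivalence {G : Type*} [Group G] (φ : G ≃* G) :
    Equivalence (twistedConj φ) := by
  constructor
  · intro x; exact ⟨1, by simp⟩
  · rintro x y ⟨h, rfl⟩
    exact ⟨h⁻¹, by simp [mul_assoc]⟩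
  · rintro x y z ⟨h, rfl⟩ ⟨k, rfl⟩
    exact ⟨k * h, by simp [mul_assoc]⟩

/-- If every automorphism `(τ_g ∘ φ)|_H` of the `φ`-invariant normal subgroup `H` has
exactly one Reidemeister class, then the quotient map induces a bijection between
Reidemeister classes of `φ` and of the induced automorphism `ψ` of `G ⧸ H`; in
particular `R(φ) = R(ψ)`. -/
theorem stmt19 {G : Type*} [Group G] (φ : G ≃* G) (H : Subgroup G) [H.Normal]
    (hH : ∀ x : G, x ∈ H ↔ φ x ∈ H)
    (ψ : (G ⧸ H) ≃* (G ⧸ H))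
    (hψ : ∀ g : G, ψ (QuotientGroup.mk g) = QuotientGroup.mk (φ g))
    (hone : ∀ g : G, ∀ h₁ h₂ : H, ∃ h : H, (h₂ : G) = ↑h * ↑h₁ * (g * φ ↑h * g⁻¹)⁻¹) :
    (∀ g₁ g₂ : G,
      twistedConj ψ (QuotientGroup.mk g₁) (QuotientGroup.mk g₂) ↔ twistedConj φ g₁ g₂) ∧
    Cardinal.mk (ReidemeisterClasses φ) = Cardinal.mk (ReidemeisterClasses ψ) := by
  have main : ∀ g₁ g₂ : G,
      twistedConj ψ (QuotientGroup.mk g₁) (QuotientGroup.mk g₂) ↔ twistedConj φ g₁ g₂ := by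
    intro g₁ g₂
    constructor
    · rintro ⟨q, hq⟩
      obtain ⟨h, rfl⟩ := QuotientGroup.mk_surjective q
      rw [hψ] at hq
      obtain ⟨a, ha⟩ : ∃ a : G, a = h * g₁ * (φ h)⁻¹ := ⟨_, rfl⟩
      have hmk : (QuotientGroup.mk g₂ : G ⧸ H) = QuotientGroup.mk a := by
        rw [hq, ha]
        simp
      have hm : g₂⁻¹ * a ∈ H := (QuotientGroup.eq).mp hmk
      obtain ⟨p, hp⟩ := hone (φ a) 1 ⟨(g₂⁻¹ * a)⁻¹, inv_mem hm⟩
      have key : ((g₂⁻¹ * a)⁻¹ : G) = ↑p * (φ a * φ ↑p * (φ a)⁻¹)⁻¹ := by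
        simpa using hp
      have key2 : g₂ = a * (↑p * (φ a * φ ↑p * (φ a)⁻¹)⁻¹) := by
        rw [← key]
        group
      refine ⟨a * ↑p * a⁻¹ * h, ?_⟩
      have hφ : φ (a * ↑p * a⁻¹ * h) = φ a * φ ↑p * (φ a)⁻¹ * φ h := by
        simp [map_mul]
      rw [hφ, key2]
      generalize hb : φ a = b
      generalize hq : φ (↑p : G) = q
      generalize hc : φ h = c at ha ⊢
      rw [ha]
      group
    · rintro ⟨h, rfl⟩
      refine ⟨QuotientGroup.mk h, ?_⟩
      rw [hψ]
      simp [QuotientGroup.mk_mul, QuotientGroup.mk_inv]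
  refine ⟨main, ?_⟩
  have hcompat : ∀ x y : G, twistedConj φ x y →
      twistedConj ψ (QuotientGroup.mk x) (QuotientGroup.mk y) :=
    fun x y hxy => (main x y).mpr hxy
  let f : ReidemeisterClasses φ → ReidemeisterClasses ψ :=
    Quot.map QuotientGroup.mk hcompat
  have hsurj : Function.Surjective f := by
    rintro ⟨q⟩
    obtain ⟨g, rfl⟩ := QuotientGroup.mk_surjective q
    exact ⟨Quot.mk _ g, rfl⟩
  have hinj : Function.Injective f := by
    rintro ⟨x⟩ ⟨y⟩ hxy
    have : Quot.mk (twistedConj ψ) (QuotientGroup.mk x)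
        = Quot.mk (twistedConj ψ) (QuotientGroup.mk y) := hxy
    have hrel : twistedConj ψ (QuotientGroup.mk x) (QuotientGroup.mk y) :=
      ((twistedConj_equivalence ψ).eqvGen_iff).mp (Quot.eq.mp this)
    exact Quot.sound ((main x y).mp hrel)
  exact Cardinal.mk_congr (Equiv.ofBijective f ⟨hinj, hsurj⟩)
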